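/- arXiv:1210.8227 — 4 statements merged into one kernel-verified Lean document; each statement's English description precedes it below -/
import Mathlib

section
/- For bounded operators U_0 and V on a Hilbert space and natural numbers n ≤ k, the n-th derivative in t of (U_0 + tV)^k equals n! times the sum over all tuples (k_0, k_1, ..., k_n) of nonnegative integers with k_0 + k_1 + ... + k_n = k - n of the operators U_t^{k_0} V U_t^{k_1} V ... V U_t^{k_n}, where U_t = U_0 + tV. If n > k, the n-th derivative is zero. -/
set_option synthInstance.maxHeartbeats 400000
set_option maxHeartbeats 1000000

noncomputable section

variable {H : Type*} [NormedAddCommGroup H] [InnerProductSpace ℂ H] [CompleteSpace H]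

open Finset

namespace IterOpPow

/-- Sum over `k_0 + ⋯ + k_m = d` of `A^{k_0} V A^{k_1} V ⋯ V A^{k_m}`. -/
def T (A V : H →L[ℂ] H) (m d : ℕ) : H →L[ℂ] H :=
  ∑ kappa ∈ Finset.Nat.antidiagonalTuple (m + 1) d,
    (List.ofFn fun i : Fin m => A ^ kappa i.castSucc * V).prod * A ^ kappa (Fin.last m)

lemma sum_antidiagonalTuple_succ {M : Type*} [AddCommMonoid M] (m d : ℕ)
    (f : (Fin (m + 1) → ℕ) → M) :
    ∑ κ ∈ Finset.Nat.antidiagonalTuple (m + 1) d, f κ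
      = ∑ p ∈ Finset.HasAntidiagonal.antidiagonal d,
          ∑ κ ∈ Finset.Nat.antidiagonalTuple m p.2, f (Fin.cons p.1 κ) := by
  rw [Finset.sum_sigma']
  refine Finset.sum_nbij'
    (fun κ : Fin (m + 1) → ℕ =>
      (⟨(κ 0, ∑ i : Fin m, κ i.succ), Fin.tail κ⟩ : Σ _p : ℕ × ℕ, Fin m → ℕ))
    (fun q : Σ _p : ℕ × ℕ, Fin m → ℕ => Fin.cons q.1.1 q.2) ?_ ?_ ?_ ?_ ?_
  · intro κ hκ
    rw [Finset.Nat.mem_antidiagonalTuple] at hκ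
    refine Finset.mem_sigma.2 ⟨?_, ?_⟩
    · rw [Finset.HasAntidiagonal.mem_antidiagonal]
      rw [← hκ, Fin.sum_univ_succ]
    · exact Finset.Nat.mem_antidiagonalTuple.2 rfl
  · intro q hq
    rw [Finset.mem_sigma, Finset.HasAntidiagonal.mem_antidiagonal, Finset.Nat.mem_antidiagonalTuple] at hq
    rw [Finset.Nat.mem_antidiagonalTuple, Fin.sum_cons, hq.2, hq.1]
  · intro κ _
    exact Fin.cons_self_tail κ
  · intro q hq
    rw [Finset.mem_sigma, Finset.HasAntidiagonal.mem_antidiagonal, Finset.Nat.mem_antidiagonalTuple] at hq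
    obtain ⟨⟨a, b⟩, κ⟩ := q
    simp only at hq ⊢
    have h1 : (Fin.cons a κ : Fin (m+1) → ℕ) 0 = a := Fin.cons_zero _ _
    have h2 : (∑ i : Fin m, (Fin.cons a κ : Fin (m+1) → ℕ) i.succ) = b := by
      simp only [Fin.cons_succ]; exact hq.2
    have h3 : Fin.tail (Fin.cons a κ : Fin (m+1) → ℕ) = κ := Fin.tail_cons _ _
    refine Sigma.ext ?_ ?_
    · simp [h1, h2, hq.2]
    · simp [h3]
  · intro κ _
    rw [Fin.cons_self_tail]

lemma T_zero (A V : H →L[ℂ] H) (d : ℕ) : T A V 0 d = A ^ d := by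
  simp [T, Finset.Nat.antidiagonalTuple_one, Matrix.cons_val_fin_one]

lemma T_cons (A V : H →L[ℂ] H) (m d : ℕ) :
    T A V (m + 1) d = ∑ p ∈ Finset.HasAntidiagonal.antidiagonal d, A ^ p.1 * V * T A V m p.2 := by
  rw [T, sum_antidiagonalTuple_succ]
  refine Finset.sum_congr rfl fun p _ => ?_
  rw [T, Finset.mul_sum]
  refine Finset.sum_congr rfl fun κ _ => ?_
  rw [List.ofFn_succ]
  simp only [Fin.castSucc_zero, Fin.cons_zero, Fin.succ_last]
  have : (fun i : Fin m => A ^ (Fin.cons p.1 κ : Fin (m+2) → ℕ) i.succ.castSucc * V)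
      = fun i : Fin m => A ^ κ i.castSucc * V := by
    funext i
    rw [← Fin.succ_castSucc, Fin.cons_succ]
  rw [this, List.prod_cons, ← Fin.succ_last, Fin.cons_succ, mul_assoc]

lemma T_succ_zero (A V : H →L[ℂ] H) (m : ℕ) : T A V (m + 1) 0 = V * T A V m 0 := by
  rw [T_cons, Finset.Nat.antidiagonal_zero, Finset.sum_singleton, pow_zero, one_mul]

lemma T_rec (A V : H →L[ℂ] H) (m d : ℕ) :
    T A V (m + 1) (d + 1) = A * T A V (m + 1) d + V * T A V m (d + 1) := by
  rw [T_cons, Finset.Nat.antidiagonal_succ, Finset.sum_cons, Finset.sum_map]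
  simp only [Function.Embedding.coe_prodMap, Function.Embedding.coeFn_mk,
    Function.Embedding.refl_apply, Prod.map_fst, Prod.map_snd, pow_zero, one_mul]
  rw [add_comm]
  congr 1
  rw [T_cons, Finset.mul_sum]
  refine Finset.sum_congr rfl fun p _ => ?_
  simp only [pow_succ', mul_assoc]

lemma expand (A V : H →L[ℂ] H) (r : ℝ) (k : ℕ) :
    (A + r • V) ^ k = ∑ m ∈ Finset.range (k + 1), r ^ m • T A V m (k - m) := by
  induction k with
  | zero => simp [T_zero]
  | succ k ih =>
    rw [pow_succ', ih, add_mul, Finset.mul_sum, smul_mul_assoc, Finset.mul_sum,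
      Finset.smul_sum]
    have hA : ∀ m, A * (r ^ m • T A V m (k - m)) = r ^ m • (A * T A V m (k - m)) :=
      fun m => mul_smul_comm _ _ _
    have hV : ∀ m, r • (V * (r ^ m • T A V m (k - m)))
        = r ^ (m + 1) • (V * T A V m (k - m)) := by
      intro m
      rw [mul_smul_comm, smul_smul, ← pow_succ']
    simp only [hA, hV]
    rw [Finset.sum_range_succ' (fun m => r ^ m • T A V m (k + 1 - m)) (k + 1)]
    simp only [pow_zero, one_smul, Nat.sub_zero, Nat.succ_sub_succ]
    rw [Finset.sum_range_succ (fun m => r ^ (m + 1) • T A V (m + 1) (k - m)) k]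
    rw [Finset.sum_range_succ (fun m => r ^ (m + 1) • (V * T A V m (k - m))) k]
    have hrec : ∀ m ∈ Finset.range k, r ^ (m + 1) • T A V (m + 1) (k - m)
        = r ^ (m + 1) • (A * T A V (m + 1) (k - (m + 1)))
          + r ^ (m + 1) • (V * T A V m (k - m)) := by
      intro m hm
      rw [Finset.mem_range] at hm
      have : k - m = (k - (m + 1)) + 1 := by omega
      rw [this, T_rec, smul_add, ← this]
    rw [Finset.sum_congr rfl hrec, Finset.sum_add_distrib]
    rw [Finset.sum_range_succ' (fun m => r ^ m • (A * T A V m (k - m))) k]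
    simp only [pow_zero, one_smul, Nat.sub_zero, Nat.succ_sub_succ, Nat.sub_self]
    rw [T_zero, T_zero, T_succ_zero, ← pow_succ']
    abel

lemma iteratedDeriv_poly_sum (t : ℝ) (C : ℕ → (H →L[ℂ] H)) (K n : ℕ) :
    iteratedDeriv n (fun s : ℝ => ∑ m ∈ Finset.range K, (s - t) ^ m • C m)
      = fun s => ∑ m ∈ Finset.range K,
          ((m.descFactorial n : ℝ) * (s - t) ^ (m - n)) • C m := by
  induction n with
  | zero =>
    rw [iteratedDeriv_zero]
    funext s
    simp
  | succ n ih =>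
    rw [iteratedDeriv_succ, ih]
    funext s
    have h : ∀ m ∈ Finset.range K,
        HasDerivAt (fun s : ℝ => ((m.descFactorial n : ℝ) * (s - t) ^ (m - n)) • C m)
          (((m.descFactorial (n + 1) : ℝ) * (s - t) ^ (m - (n + 1))) • C m) s := by
      intro m _
      have h1 : HasDerivAt (fun s : ℝ => s - t) 1 s := (hasDerivAt_id s).sub_const t
      have h2 := h1.pow (m - n)
      have h3 := h2.const_mul (m.descFactorial n : ℝ)
      have h4 := h3.smul_const (C m)
      refine h4.congr_deriv ?_
      congr 1
      rw [Nat.descFactorial_succ, Nat.cast_mul, ← Nat.sub_sub]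
      push_cast
      ring
    exact (HasDerivAt.fun_sum h).deriv

theorem iteratedDeriv_operator_pow_eval (U₀ V : H →L[ℂ] H) (n k : ℕ) (t : ℝ) :
    iteratedDeriv n (fun s : ℝ => (U₀ + s • V) ^ k) t
      = ∑ m ∈ Finset.range (k + 1),
          ((m.descFactorial n : ℝ) * (0 : ℝ) ^ (m - n)) • T (U₀ + t • V) V m (k - m) := by
  have hfun : (fun s : ℝ => (U₀ + s • V) ^ k)
      = fun s => ∑ m ∈ Finset.range (k + 1),
          (s - t) ^ m • T (U₀ + t • V) V m (k - m) := by
    funext s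
    rw [← expand]
    congr 1
    rw [add_assoc, ← add_smul, add_sub_cancel]
  rw [hfun, iteratedDeriv_poly_sum]
  simp only [sub_self]

end IterOpPow

/-- Lemma 2.2 of the paper: for bounded operators `U₀, V` on a Hilbert space and `n ≤ k`,
the `n`-th derivative in `t` of `(U₀ + tV)^k` equals `n!` times the sum over all tuples
`(k_0, …, k_n)` of nonnegative integers with `k_0 + ⋯ + k_n = k − n` of
`U_t^{k_0} V U_t^{k_1} V ⋯ V U_t^{k_n}` (with `U_t = U₀ + tV`), and it is `0` when `n > k`. -/
theorem iteratedDeriv_operator_pow (U₀ V : H →L[ℂ] H) (n k : ℕ) (t : ℝ) :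
    (n ≤ k →
      iteratedDeriv n (fun s : ℝ => (U₀ + s • V) ^ k) t
        = (n.factorial : ℂ) •
            ∑ kappa ∈ Finset.Nat.antidiagonalTuple (n + 1) (k - n),
              (List.ofFn fun i : Fin n =>
                  (U₀ + t • V) ^ kappa i.castSucc * V).prod
                * (U₀ + t • V) ^ kappa (Fin.last n))
    ∧ (k < n → iteratedDeriv n (fun s : ℝ => (U₀ + s • V) ^ k) t = 0) := by
  rw [IterOpPow.iteratedDeriv_operator_pow_eval]
  constructor
  · intro hnk
    rw [Finset.sum_eq_single n]
    · show ((n.descFactorial n : ℝ) * (0 : ℝ) ^ (n - n)) • IterOpPow.T (U₀ + t • V) V n (k - n)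
        = (n.factorial : ℂ) • IterOpPow.T (U₀ + t • V) V n (k - n)
      rw [Nat.sub_self, pow_zero, mul_one, Nat.descFactorial_self,
        Nat.cast_smul_eq_nsmul, Nat.cast_smul_eq_nsmul]
    · intro m _ hmn
      rcases lt_or_gt_of_ne hmn with h | h
      · rw [Nat.descFactorial_eq_zero_iff_lt.2 h]
        simp
      · rw [zero_pow (by omega : m - n ≠ 0)]
        simp
    · intro hn
      exact absurd (Finset.mem_range.2 (by omega)) hn
  · intro hkn
    refine Finset.sum_eq_zero fun m hm => ?_
    rw [Finset.mem_range] at hm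
    rw [Nat.descFactorial_eq_zero_iff_lt.2 (by omega)]
    simp
end
end

section
/- Let m ≥ 0 be an integer, λ, ξ, μ complex numbers with λ ≠ μ, and h a polynomial. Define φ_{h,m}(λ,μ) := ∫_0^1 t^m h(λ + (μ−λ)t) dt. Then φ_{h,m}(λ,μ) = ((ξ−λ)/(μ−λ))^{m+1} φ_{h,m}(λ,ξ) + ((μ−ξ)/(μ−λ))^{m+1} φ_{h,m}(ξ,μ) + Σ_{k=0}^{m−1} C(m,k) ((μ−ξ)/(μ−λ))^{k+1} ((ξ−λ)/(μ−λ))^{m−k} φ_{h,k}(ξ,μ), where the last sum is absent when m = 0. -/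
open MeasureTheory Polynomial
noncomputable section

/-- ∫_0^1 t^n dt = 1/(n+1), complex valued. -/
private lemma intPow (n : ℕ) : ∫ t in (0:ℝ)..1, ((t:ℂ))^n = 1/((n:ℂ)+1) := by
  have h : Set.EqOn (fun t : ℝ => ((t:ℂ))^n) (fun t : ℝ => ((t^n : ℝ) : ℂ)) (Set.uIcc 0 1) := by
    intro t _; push_cast; ring
  rw [intervalIntegral.integral_congr h, intervalIntegral.integral_ofReal, integral_pow]
  push_cast; norm_num

/-- Expansion of ∫ s^k (a+bs)^N ds. -/
private lemma intK (a b : ℂ) (k N : ℕ) :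
    ∫ s in (0:ℝ)..1, ((s:ℂ))^k * (a + b*(s:ℂ))^N
      = ∑ i ∈ Finset.range (N+1),
          (N.choose i : ℂ) * a^i * b^(N-i) / ((k:ℂ) + ((N-i : ℕ):ℂ) + 1) := by
  have h : Set.EqOn (fun s : ℝ => ((s:ℂ))^k * (a + b*(s:ℂ))^N)
      (fun s : ℝ => ∑ i ∈ Finset.range (N+1),
        (N.choose i : ℂ) * a^i * b^(N-i) * ((s:ℂ))^(k + (N-i))) (Set.uIcc 0 1) := by
    intro s _
    simp only [add_pow, Finset.mul_sum, Finset.sum_mul]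
    apply Finset.sum_congr rfl
    intro i _
    rw [mul_pow, pow_add]
    ring
  rw [intervalIntegral.integral_congr h,
    intervalIntegral.integral_finset_sum (μ := volume) (a := (0:ℝ)) (b := 1)
      (f := fun i s => (N.choose i : ℂ) * a^i * b^(N-i) * ((s:ℂ))^(k + (N-i)))
      (fun i _ => Continuous.intervalIntegrable (by continuity) _ _)]
  apply Finset.sum_congr rfl
  intro i _
  rw [intervalIntegral.integral_const_mul, intPow]
  push_cast
  ring

/-- FTC evaluation: ∫_0^1 b (a+bs)^N ds. -/
private lemma intS (a b : ℂ) (N : ℕ) :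
    ∫ s in (0:ℝ)..1, b * (a + b*(s:ℂ))^N = ((a+b)^(N+1) - a^(N+1)) / ((N:ℂ)+1) := by
  have hd : ∀ s : ℝ, HasDerivAt (fun t : ℝ => (a + b*(t:ℂ))^(N+1) / ((N:ℂ)+1))
      (b * (a + b*(s:ℂ))^N) s := by
    intro s
    have h1 : HasDerivAt (fun z : ℂ => (a + b*z)^(N+1) / ((N:ℂ)+1))
        (((N:ℂ)+1) * (a + b*(s:ℂ))^N * b / ((N:ℂ)+1)) (s:ℝ) := by
      have := (((hasDerivAt_id ((s:ℝ):ℂ)).const_mul b).const_add a).pow (N+1)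
      simpa using this.div_const ((N:ℂ)+1)
    have h2 := h1.comp_ofReal
    have hne : ((N:ℂ)+1) ≠ 0 := Nat.cast_add_one_ne_zero N
    have : ((N:ℂ)+1) * (a + b*(s:ℂ))^N * b / ((N:ℂ)+1) = b * (a + b*(s:ℂ))^N := by
      field_simp
    rwa [this] at h2
  rw [intervalIntegral.integral_eq_sub_of_hasDerivAt (fun s _ => hd s)
    (Continuous.intervalIntegrable (by continuity) _ _)]
  push_cast
  rw [div_sub_div_same]
  ring_nf

/-- The scalar combinatorial identity at the heart of the decomposition. -/
private lemma scalarM (a : ℂ) (m j : ℕ) :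
    (1:ℂ)/((m:ℂ)+(j:ℂ)+1) = a^(m+j+1)/((m:ℂ)+(j:ℂ)+1)
      + ∑ k ∈ Finset.range (m+1), (m.choose k : ℂ) * (1-a)^(k+1) * a^(m-k) *
          (∑ i ∈ Finset.range (j+1),
            (j.choose i : ℂ) * a^i * (1-a)^(j-i) / ((k:ℂ) + ((j-i:ℕ):ℂ) + 1)) := by
  set b : ℂ := 1 - a with hb
  have key : (∑ k ∈ Finset.range (m+1), (m.choose k : ℂ) * b^(k+1) * a^(m-k) *
      (∑ i ∈ Finset.range (j+1),
        (j.choose i : ℂ) * a^i * b^(j-i) / ((k:ℂ) + ((j-i:ℕ):ℂ) + 1)))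
      = (1 - a^(m+j+1)) / ((m:ℂ)+(j:ℂ)+1) := by
    have step1 : (∑ k ∈ Finset.range (m+1), (m.choose k : ℂ) * b^(k+1) * a^(m-k) *
        (∑ i ∈ Finset.range (j+1),
          (j.choose i : ℂ) * a^i * b^(j-i) / ((k:ℂ) + ((j-i:ℕ):ℂ) + 1)))
        = ∑ k ∈ Finset.range (m+1), ∫ s in (0:ℝ)..1,
            (m.choose k : ℂ) * b^(k+1) * a^(m-k) * (((s:ℂ))^k * (a + b*(s:ℂ))^j) := by
      refine Finset.sum_congr rfl fun k _ => ?_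
      rw [← intK a b k j, ← intervalIntegral.integral_const_mul]
    rw [step1, ← intervalIntegral.integral_finset_sum
        (fun k _ => Continuous.intervalIntegrable (by continuity) _ _)]
    have step2 : Set.EqOn
        (fun s : ℝ => ∑ k ∈ Finset.range (m+1),
          (m.choose k : ℂ) * b^(k+1) * a^(m-k) * (((s:ℂ))^k * (a + b*(s:ℂ))^j))
        (fun s : ℝ => b * (a + b*(s:ℂ))^(m+j)) (Set.uIcc 0 1) := by
      intro s _
      have hp : (a + b*(s:ℂ))^m
          = ∑ k ∈ Finset.range (m+1), (b*(s:ℂ))^k * a^(m-k) * (m.choose k : ℂ) := by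
        rw [add_comm a]; exact add_pow _ _ _
      show _ = b * (a + b*(s:ℂ))^(m+j)
      rw [pow_add, ← mul_assoc, mul_comm b, mul_assoc, hp, Finset.sum_mul]
      simp only []
      refine Finset.sum_congr rfl fun k _ => ?_
      rw [mul_pow]
      ring
    rw [intervalIntegral.integral_congr step2, intS a b (m+j)]
    have hab : a + b = 1 := by rw [hb]; ring
    rw [hab, one_pow]
    push_cast
    ring_nf
  rw [key, ← add_div]
  congr 1
  ring

/-- Expansion of ∫ t^m g(t) dt over coefficients. -/
private lemma expandE1 (g : Polynomial ℂ) (m : ℕ) :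
    ∫ t in (0:ℝ)..1, ((t:ℂ))^m * g.eval ((t:ℂ))
      = ∑ j ∈ Finset.range (g.natDegree + 1), g.coeff j * (1/((m:ℂ)+(j:ℂ)+1)) := by
  have h : Set.EqOn (fun t : ℝ => ((t:ℂ))^m * g.eval ((t:ℂ)))
      (fun t : ℝ => ∑ j ∈ Finset.range (g.natDegree + 1),
        g.coeff j * ((t:ℂ))^(m+j)) (Set.uIcc 0 1) := by
    intro t _
    dsimp only
    rw [Polynomial.eval_eq_sum_range, Finset.mul_sum]
    refine Finset.sum_congr rfl fun j _ => ?_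
    rw [pow_add]; ring
  rw [intervalIntegral.integral_congr h,
    intervalIntegral.integral_finset_sum (μ := volume) (a := (0:ℝ)) (b := 1)
      (f := fun j t => g.coeff j * ((t:ℂ))^(m+j))
      (fun j _ => Continuous.intervalIntegrable (by continuity) _ _)]
  refine Finset.sum_congr rfl fun j _ => ?_
  rw [intervalIntegral.integral_const_mul, intPow]
  push_cast
  ring

/-- Expansion of ∫ t^m g(a t) dt over coefficients. -/
private lemma expandE2 (g : Polynomial ℂ) (m : ℕ) (a : ℂ) :
    ∫ t in (0:ℝ)..1, ((t:ℂ))^m * g.eval (a*(t:ℂ))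
      = ∑ j ∈ Finset.range (g.natDegree + 1), g.coeff j * (a^j/((m:ℂ)+(j:ℂ)+1)) := by
  have h : Set.EqOn (fun t : ℝ => ((t:ℂ))^m * g.eval (a*(t:ℂ)))
      (fun t : ℝ => ∑ j ∈ Finset.range (g.natDegree + 1),
        g.coeff j * a^j * ((t:ℂ))^(m+j)) (Set.uIcc 0 1) := by
    intro t _
    dsimp only
    rw [Polynomial.eval_eq_sum_range, Finset.mul_sum]
    refine Finset.sum_congr rfl fun j _ => ?_
    rw [mul_pow, pow_add]; ring
  rw [intervalIntegral.integral_congr h,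
    intervalIntegral.integral_finset_sum (μ := volume) (a := (0:ℝ)) (b := 1)
      (f := fun j t => g.coeff j * a^j * ((t:ℂ))^(m+j))
      (fun j _ => Continuous.intervalIntegrable (by continuity) _ _)]
  refine Finset.sum_congr rfl fun j _ => ?_
  rw [intervalIntegral.integral_const_mul, intPow]
  push_cast
  ring

/-- Expansion of ∫ t^k g(a + b t) dt over coefficients. -/
private lemma expandE3 (g : Polynomial ℂ) (k : ℕ) (a b : ℂ) :
    ∫ t in (0:ℝ)..1, ((t:ℂ))^k * g.eval (a + b*(t:ℂ))
      = ∑ j ∈ Finset.range (g.natDegree + 1), g.coeff j *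
          (∑ i ∈ Finset.range (j+1),
            (j.choose i : ℂ) * a^i * b^(j-i) / ((k:ℂ) + ((j-i:ℕ):ℂ) + 1)) := by
  have h : Set.EqOn (fun t : ℝ => ((t:ℂ))^k * g.eval (a + b*(t:ℂ)))
      (fun t : ℝ => ∑ j ∈ Finset.range (g.natDegree + 1),
        g.coeff j * (((t:ℂ))^k * (a + b*(t:ℂ))^j)) (Set.uIcc 0 1) := by
    intro t _
    dsimp only
    rw [Polynomial.eval_eq_sum_range, Finset.mul_sum]
    refine Finset.sum_congr rfl fun j _ => ?_
    ring
  rw [intervalIntegral.integral_congr h,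
    intervalIntegral.integral_finset_sum (μ := volume) (a := (0:ℝ)) (b := 1)
      (f := fun j t => g.coeff j * (((t:ℂ))^k * (a + b*(t:ℂ))^j))
      (fun j _ => Continuous.intervalIntegrable (by continuity) _ _)]
  refine Finset.sum_congr rfl fun j _ => ?_
  rw [intervalIntegral.integral_const_mul, intK]

/-- `φ_{h,m}(λ,μ) = ∫_0^1 t^m h(λ + (μ−λ)t) dt` for a complex polynomial `h`. -/
def phiHM (h : Polynomial ℂ) (m : ℕ) (lam mu : ℂ) : ℂ :=
  ∫ t in (0:ℝ)..1, ((t : ℂ)) ^ m * h.eval (lam + (mu - lam) * (t : ℂ))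

/-- Decomposition of `φ_{h,m}` (Lemma 2.11): for `λ ≠ μ` and any `ξ`,
`φ_{h,m}(λ,μ)` splits into contributions along `[λ,ξ]` and `[ξ,μ]`. -/
theorem phiHM_decomposition (m : ℕ) (h : Polynomial ℂ) (lam xi mu : ℂ) (hne : lam ≠ mu) :
    phiHM h m lam mu =
      ((xi - lam) / (mu - lam)) ^ (m + 1) * phiHM h m lam xi
        + ((mu - xi) / (mu - lam)) ^ (m + 1) * phiHM h m xi mu
        + ∑ k ∈ Finset.range m,
            (m.choose k : ℂ) * ((mu - xi) / (mu - lam)) ^ (k + 1)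
              * ((xi - lam) / (mu - lam)) ^ (m - k) * phiHM h k xi mu := by
  have hd : mu - lam ≠ 0 := sub_ne_zero.mpr (Ne.symm hne)
  obtain ⟨a, ha⟩ : ∃ a : ℂ, a = (xi - lam) / (mu - lam) := ⟨_, rfl⟩
  rw [← ha]
  have haa : (mu - lam) * a = xi - lam := by rw [ha]; field_simp
  have hbb : (mu - lam) * (1 - a) = mu - xi := by rw [ha]; field_simp; ring
  have h1a : (mu - xi) / (mu - lam) = 1 - a := by
    rw [ha]; field_simp; ring
  set g : Polynomial ℂ := h.comp (Polynomial.C lam + Polynomial.C (mu - lam) * Polynomial.X)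
    with hg
  have hge : ∀ x : ℂ, g.eval x = h.eval (lam + (mu - lam) * x) := by
    intro x; simp [hg, Polynomial.eval_comp]
  have k1 : phiHM h m lam mu = ∫ t in (0:ℝ)..1, ((t:ℂ))^m * g.eval ((t:ℂ)) := by
    simp only [phiHM]
    exact intervalIntegral.integral_congr fun t _ => by rw [hge]
  have k2 : phiHM h m lam xi = ∫ t in (0:ℝ)..1, ((t:ℂ))^m * g.eval (a*(t:ℂ)) := by
    simp only [phiHM]
    refine intervalIntegral.integral_congr fun t _ => ?_
    rw [hge]
    congr 2
    linear_combination (-(t:ℂ)) * haa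
  have k3 : ∀ k : ℕ, phiHM h k xi mu
      = ∫ t in (0:ℝ)..1, ((t:ℂ))^k * g.eval (a + (1-a)*(t:ℂ)) := by
    intro k
    simp only [phiHM]
    refine intervalIntegral.integral_congr fun t _ => ?_
    rw [hge]
    congr 2
    linear_combination -haa - (t:ℂ) * hbb
  rw [k1, k2, h1a]
  simp only [k3]
  rw [expandE1, expandE2]
  simp only [expandE3]
  have hswap : (∑ k ∈ Finset.range m, (m.choose k : ℂ) * (1-a)^(k+1) * a^(m-k) *
      (∑ j ∈ Finset.range (g.natDegree + 1), g.coeff j *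
        (∑ i ∈ Finset.range (j+1),
          (j.choose i : ℂ) * a^i * (1-a)^(j-i) / ((k:ℂ) + ((j-i:ℕ):ℂ) + 1))))
      = ∑ j ∈ Finset.range (g.natDegree + 1), ∑ k ∈ Finset.range m,
          (m.choose k : ℂ) * (1-a)^(k+1) * a^(m-k) * (g.coeff j *
            (∑ i ∈ Finset.range (j+1),
              (j.choose i : ℂ) * a^i * (1-a)^(j-i) / ((k:ℂ) + ((j-i:ℕ):ℂ) + 1))) := by
    rw [Finset.sum_comm]
    exact Finset.sum_congr rfl fun k _ => Finset.mul_sum _ _ _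
  rw [hswap, Finset.mul_sum, Finset.mul_sum, ← Finset.sum_add_distrib,
    ← Finset.sum_add_distrib]
  refine Finset.sum_congr rfl fun j _ => ?_
  have hM := scalarM a m j
  have hstep : (1:ℂ)/((m:ℂ)+(j:ℂ)+1)
      = a^(m+1) * (a^j/((m:ℂ)+(j:ℂ)+1))
        + (1-a)^(m+1) * (∑ i ∈ Finset.range (j+1),
            (j.choose i : ℂ) * a^i * (1-a)^(j-i) / ((m:ℂ) + ((j-i:ℕ):ℂ) + 1))
        + ∑ k ∈ Finset.range m, (m.choose k : ℂ) * (1-a)^(k+1) * a^(m-k) *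
            (∑ i ∈ Finset.range (j+1),
              (j.choose i : ℂ) * a^i * (1-a)^(j-i) / ((k:ℂ) + ((j-i:ℕ):ℂ) + 1)) := by
    rw [hM, Finset.sum_range_succ, Nat.choose_self, Nat.sub_self, pow_zero, Nat.cast_one]
    ring
  rw [mul_comm (g.coeff j) ((1:ℂ)/((m:ℂ)+(j:ℂ)+1)), hstep]
  rw [add_mul, add_mul, Finset.sum_mul]
  congr 1
  · congr 1
    · ring
    · ring
  · exact Finset.sum_congr rfl fun k _ => by ring
end
end

section
/- Let m ≥ 1 be an integer, κ ∈ (0,1], λ, ξ, μ complex numbers with λ ≠ μ, and h a polynomial. Then ∫_0^κ ∫_0^t t^{m−1} h(κξ + (μ−ξ)t + (λ−μ)s) ds dt = (1/m)((ξ−λ)/(μ−λ)) ∫_0^κ (κ^m − t^m) h(κξ + (λ−ξ)t) dt + (1/m)((μ−ξ)/(μ−λ)) ∫_0^κ (κ^m − t^m) h(κξ + (μ−ξ)t) dt. -/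
open MeasureTheory Polynomial
noncomputable section

lemma exists_antideriv (h : Polynomial ℂ) : ∃ H : Polynomial ℂ, H.derivative = h := by
  induction h using Polynomial.induction_on' with
  | add p q hp hq =>
      obtain ⟨P, hP⟩ := hp; obtain ⟨Q, hQ⟩ := hq
      exact ⟨P + Q, by simp [hP, hQ]⟩
  | monomial n a =>
      refine ⟨Polynomial.C (a / (n+1)) * Polynomial.X ^ (n+1), ?_⟩
      have hn : ((n : ℂ) + 1) ≠ 0 := Nat.cast_add_one_ne_zero n
      rw [Polynomial.derivative_C_mul, Polynomial.derivative_X_pow]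
      push_cast
      rw [← mul_assoc, ← Polynomial.C_mul, div_mul_cancel₀ _ hn]
      rw [← Polynomial.C_mul_X_pow_eq_monomial]

lemma hasDerivAt_eval_affine (P : Polynomial ℂ) (a c : ℂ) (t : ℝ) :
    HasDerivAt (fun t : ℝ => P.eval (a + c * (t:ℂ))) (c * P.derivative.eval (a + c * t)) t := by
  have h2 : HasDerivAt (fun z : ℂ => a + c * z) c (t : ℂ) := by
    simpa using ((hasDerivAt_id ((t:ℝ):ℂ)).const_mul c).const_add a
  have h1 : HasDerivAt (fun z : ℂ => P.eval (a + c * z))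
      (c * P.derivative.eval (a + c * t)) (t : ℂ) := by
    exact ((P.hasDerivAt (a + c * (t:ℂ))).comp (t:ℂ) h2).congr_deriv (mul_comm _ _)
  exact h1.comp_ofReal

lemma cont_affine (P : Polynomial ℂ) (a c : ℂ) :
    Continuous (fun t : ℝ => P.eval (a + c * (t:ℂ))) :=
  P.continuous.comp (by continuity)

lemma integral_deriv_affine (P : Polynomial ℂ) (a c : ℂ) (u v : ℝ) :
    (∫ s in u..v, c * P.derivative.eval (a + c * (s:ℂ)))
      = P.eval (a + c * v) - P.eval (a + c * u) := by
  apply intervalIntegral.integral_eq_sub_of_hasDerivAt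
  · intro t _; exact hasDerivAt_eval_affine P a c t
  · exact (continuous_const.mul (cont_affine P.derivative a c)).intervalIntegrable u v


lemma lemC (m : ℕ) (hm : 1 ≤ m) (kappa : ℝ) (b c : ℂ) (H : Polynomial ℂ) :
    (m : ℂ) * ∫ t in (0:ℝ)..kappa, ((t:ℂ))^(m-1) * H.eval (b + c * (t:ℂ))
      = c * (∫ t in (0:ℝ)..kappa,
            ((kappa:ℂ)^m - (t:ℂ)^m) * H.derivative.eval (b + c * (t:ℂ)))
        + (kappa:ℂ)^m * H.eval b := by
  have hm0 : m ≠ 0 := by omega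
  have key : (∫ t in (0:ℝ)..kappa,
      (((m:ℂ) * (t:ℂ)^(m-1)) * H.eval (b + c * (t:ℂ))
        + ((t:ℂ)^m - (kappa:ℂ)^m) * (c * H.derivative.eval (b + c * (t:ℂ)))))
      = (kappa:ℂ)^m * H.eval b := by
    rw [intervalIntegral.integral_eq_sub_of_hasDerivAt
      (f := fun t : ℝ => ((t:ℂ)^m - (kappa:ℂ)^m) * H.eval (b + c * (t:ℂ)))]
    · simp [zero_pow hm0]
    · intro t _
      exact (((hasDerivAt_pow m ((t:ℝ):ℂ)).comp_ofReal).sub_const _).mul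
        (hasDerivAt_eval_affine H b c t)
    · apply Continuous.intervalIntegrable
      exact ((continuous_const.mul (Complex.continuous_ofReal.pow _)).mul
          (cont_affine H b c)).add
        (((Complex.continuous_ofReal.pow m).sub continuous_const).mul
          (continuous_const.mul (cont_affine H.derivative b c)))
  rw [intervalIntegral.integral_add
      (f := fun t : ℝ => ((m:ℂ) * (t:ℂ)^(m-1)) * H.eval (b + c * (t:ℂ)))
      (g := fun t : ℝ => ((t:ℂ)^m - (kappa:ℂ)^m) * (c * H.derivative.eval (b + c * (t:ℂ))))
      ((((continuous_const.mul (Complex.continuous_ofReal.pow _)).mul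
        (cont_affine H b c))).intervalIntegrable _ _)
      ((((Complex.continuous_ofReal.pow m).sub continuous_const).mul
        (continuous_const.mul (cont_affine H.derivative b c))).intervalIntegrable _ _)] at key
  have e2 : (∫ t in (0:ℝ)..kappa,
      ((t:ℂ)^m - (kappa:ℂ)^m) * (c * H.derivative.eval (b + c * (t:ℂ))))
      = -(c * ∫ t in (0:ℝ)..kappa,
          ((kappa:ℂ)^m - (t:ℂ)^m) * H.derivative.eval (b + c * (t:ℂ))) := by
    rw [← intervalIntegral.integral_const_mul, ← intervalIntegral.integral_neg]
    congr 1; funext t; ring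
  have e1 : (∫ t in (0:ℝ)..kappa, ((m:ℂ) * (t:ℂ)^(m-1)) * H.eval (b + c * (t:ℂ)))
      = (m:ℂ) * ∫ t in (0:ℝ)..kappa, ((t:ℂ))^(m-1) * H.eval (b + c * (t:ℂ)) := by
    rw [← intervalIntegral.integral_const_mul]
    congr 1; funext t; ring
  rw [e1, e2] at key
  linear_combination key

/-- Lemma 2.14 of the paper: for `m ≥ 1`, `κ ∈ (0,1]`, `λ ≠ μ` and a polynomial `h`,
`∫_0^κ ∫_0^t t^{m−1} h(κξ + (μ−ξ)t + (λ−μ)s) ds dt`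
equals
`(1/m)((ξ−λ)/(μ−λ)) ∫_0^κ (κ^m − t^m) h(κξ + (λ−ξ)t) dt
 + (1/m)((μ−ξ)/(μ−λ)) ∫_0^κ (κ^m − t^m) h(κξ + (μ−ξ)t) dt`. -/
theorem double_integral_tm_decomposition (m : ℕ) (hm : 1 ≤ m) (kappa : ℝ)
    (hk0 : 0 < kappa) (hk1 : kappa ≤ 1) (lam xi mu : ℂ) (hne : lam ≠ mu)
    (h : Polynomial ℂ) :
    (∫ t in (0:ℝ)..kappa, ∫ s in (0:ℝ)..t,
        ((t : ℂ)) ^ (m - 1) *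
          h.eval ((kappa : ℂ) * xi + (mu - xi) * (t : ℂ) + (lam - mu) * (s : ℂ)))
      = (1 / (m : ℂ)) * ((xi - lam) / (mu - lam)) *
          (∫ t in (0:ℝ)..kappa,
            ((kappa : ℂ) ^ m - (t : ℂ) ^ m) * h.eval ((kappa : ℂ) * xi + (lam - xi) * (t : ℂ)))
        + (1 / (m : ℂ)) * ((mu - xi) / (mu - lam)) *
          (∫ t in (0:ℝ)..kappa,
            ((kappa : ℂ) ^ m - (t : ℂ) ^ m) * h.eval ((kappa : ℂ) * xi + (mu - xi) * (t : ℂ))) := by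
  obtain ⟨H, hH⟩ := exists_antideriv h
  have hc : lam - mu ≠ 0 := sub_ne_zero.mpr hne
  have hc' : mu - lam ≠ 0 := sub_ne_zero.mpr hne.symm
  have hmC : (m : ℂ) ≠ 0 := Nat.cast_ne_zero.mpr (by omega)
  have step1 : ∀ t : ℝ,
      (∫ s in (0:ℝ)..t, ((t:ℂ))^(m-1) *
          h.eval ((kappa : ℂ) * xi + (mu - xi) * (t : ℂ) + (lam - mu) * (s : ℂ)))
      = (1 / (lam - mu)) * (((t:ℂ))^(m-1) * H.eval ((kappa:ℂ)*xi + (lam - xi) * (t:ℂ))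
          - ((t:ℂ))^(m-1) * H.eval ((kappa:ℂ)*xi + (mu - xi) * (t:ℂ))) := by
    intro t
    have base := integral_deriv_affine H ((kappa:ℂ)*xi + (mu - xi) * (t:ℂ)) (lam - mu) 0 t
    rw [hH, intervalIntegral.integral_const_mul] at base
    have e1 : (kappa:ℂ)*xi + (mu - xi) * (t:ℂ) + (lam - mu) * (t:ℂ)
        = (kappa:ℂ)*xi + (lam - xi) * (t:ℂ) := by ring
    rw [e1] at base
    simp only [Complex.ofReal_zero, mul_zero, add_zero] at base
    rw [intervalIntegral.integral_const_mul]
    rw [show (∫ s in (0:ℝ)..t,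
        h.eval ((kappa : ℂ) * xi + (mu - xi) * (t : ℂ) + (lam - mu) * (s : ℂ)))
      = (1/(lam-mu)) * ((lam - mu) * ∫ s in (0:ℝ)..t,
        h.eval ((kappa : ℂ) * xi + (mu - xi) * (t : ℂ) + (lam - mu) * (s : ℂ)))
      from by field_simp]
    rw [base]; ring
  simp only [step1]
  rw [intervalIntegral.integral_const_mul,
    intervalIntegral.integral_sub
      (f := fun t : ℝ => ((t:ℂ))^(m-1) * H.eval ((kappa:ℂ)*xi + (lam - xi) * (t:ℂ)))
      (g := fun t : ℝ => ((t:ℂ))^(m-1) * H.eval ((kappa:ℂ)*xi + (mu - xi) * (t:ℂ)))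
      (((Complex.continuous_ofReal.pow _).mul
        (cont_affine H ((kappa:ℂ)*xi) (lam - xi))).intervalIntegrable _ _)
      (((Complex.continuous_ofReal.pow _).mul
        (cont_affine H ((kappa:ℂ)*xi) (mu - xi))).intervalIntegrable _ _)]
  have E1 := lemC m hm kappa ((kappa:ℂ)*xi) (lam - xi) H
  have E2 := lemC m hm kappa ((kappa:ℂ)*xi) (mu - xi) H
  rw [hH] at E1 E2
  set J1 := ∫ t in (0:ℝ)..kappa, ((t:ℂ))^(m-1) * H.eval ((kappa:ℂ)*xi + (lam - xi) * (t:ℂ))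
  set J2 := ∫ t in (0:ℝ)..kappa, ((t:ℂ))^(m-1) * H.eval ((kappa:ℂ)*xi + (mu - xi) * (t:ℂ))
  set I1 := ∫ t in (0:ℝ)..kappa,
      ((kappa : ℂ) ^ m - (t : ℂ) ^ m) * h.eval ((kappa : ℂ) * xi + (lam - xi) * (t : ℂ))
  set I2 := ∫ t in (0:ℝ)..kappa,
      ((kappa : ℂ) ^ m - (t : ℂ) ^ m) * h.eval ((kappa : ℂ) * xi + (mu - xi) * (t : ℂ))
  have hJ1 : J1 = ((lam - xi) * I1 + (kappa:ℂ)^m * H.eval ((kappa:ℂ)*xi)) / m := by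
    rw [eq_div_iff hmC]; linear_combination E1
  have hJ2 : J2 = ((mu - xi) * I2 + (kappa:ℂ)^m * H.eval ((kappa:ℂ)*xi)) / m := by
    rw [eq_div_iff hmC]; linear_combination E2
  rw [hJ1, hJ2]
  field_simp
  ring
end
end

section
/- Let k ≥ 1 be an integer, κ ∈ (0,1], λ, ξ, μ complex numbers with λ ≠ ξ, and h a polynomial. Then ∫_0^κ ∫_0^t s^{k−1} h(κξ + (λ−ξ)t + (μ−λ)s) ds dt = (1/k)((μ−λ)/(ξ−λ)) ∫_0^κ t^k h(κλ + (μ−λ)t) dt − (1/k)((μ−ξ)/(ξ−λ)) ∫_0^κ t^k h(κξ + (μ−ξ)t) dt. -/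
open MeasureTheory Polynomial
noncomputable section

lemma triangle_swap {f : ℝ → ℝ → ℂ} (hf : Continuous fun p : ℝ × ℝ => f p.1 p.2)
    {κ : ℝ} (hκ : 0 ≤ κ) :
    ∫ t in (0:ℝ)..κ, ∫ s in (0:ℝ)..t, f t s = ∫ s in (0:ℝ)..κ, ∫ t in s..κ, f t s := by
  set μ : Measure ℝ := volume.restrict (Set.Icc (0:ℝ) κ) with hμ
  have hT : MeasurableSet {p : ℝ × ℝ | p.2 ≤ p.1} :=
    measurableSet_le measurable_snd measurable_fst
  set F : ℝ × ℝ → ℂ := ({p : ℝ × ℝ | p.2 ≤ p.1}).indicator (fun p => f p.1 p.2) with hF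
  have hint : Integrable F (μ.prod μ) := by
    rw [hμ, Measure.prod_restrict]
    exact (hf.continuousOn.integrableOn_compact (isCompact_Icc.prod isCompact_Icc)).indicator hT
  have hswap := MeasureTheory.integral_integral_swap (f := fun t s => F (t, s)) hint
  have h1 : (∫ t in (0:ℝ)..κ, ∫ s in (0:ℝ)..t, f t s) = ∫ t, (∫ s, F (t, s) ∂μ) ∂μ := by
    rw [intervalIntegral.integral_of_le hκ, ← integral_Icc_eq_integral_Ioc, hμ]
    refine setIntegral_congr_fun measurableSet_Icc (fun t ht => ?_)
    have hFt : (fun s => F (t, s)) = (Set.Iic t).indicator (fun s => f t s) := by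
      funext s
      simp only [hF, Set.indicator_apply, Set.mem_setOf_eq, Set.mem_Iic]
    rw [hFt, integral_indicator measurableSet_Iic, Measure.restrict_restrict measurableSet_Iic]
    have : Set.Iic t ∩ Set.Icc 0 κ = Set.Icc 0 t := by
      ext x
      simp only [Set.mem_inter_iff, Set.mem_Icc, Set.mem_Iic]
      exact ⟨fun hx => ⟨hx.2.1, hx.1⟩, fun hx => ⟨hx.2, hx.1, hx.2.trans ht.2⟩⟩
    rw [this, integral_Icc_eq_integral_Ioc, ← intervalIntegral.integral_of_le ht.1]
  have h2 : (∫ s in (0:ℝ)..κ, ∫ t in s..κ, f t s) = ∫ s, (∫ t, F (t, s) ∂μ) ∂μ := by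
    rw [intervalIntegral.integral_of_le hκ, ← integral_Icc_eq_integral_Ioc, hμ]
    refine setIntegral_congr_fun measurableSet_Icc (fun s hs => ?_)
    have hFs : (fun t => F (t, s)) = (Set.Ici s).indicator (fun t => f t s) := by
      funext t
      simp only [hF, Set.indicator_apply, Set.mem_setOf_eq, Set.mem_Ici]
    rw [hFs, integral_indicator measurableSet_Ici, Measure.restrict_restrict measurableSet_Ici]
    have : Set.Ici s ∩ Set.Icc 0 κ = Set.Icc s κ := by
      ext x
      simp only [Set.mem_inter_iff, Set.mem_Icc, Set.mem_Ici]
      exact ⟨fun hx => ⟨hx.1, hx.2.2⟩, fun hx => ⟨hx.1, hs.1.trans hx.1, hx.2⟩⟩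
    rw [this, integral_Icc_eq_integral_Ioc, ← intervalIntegral.integral_of_le hs.2]
  rw [h1, h2, hswap]

def pAntideriv (p : Polynomial ℂ) : Polynomial ℂ :=
  p.sum fun n a => Polynomial.C (a / (n + 1)) * X ^ (n + 1)

lemma derivative_pAntideriv (p : Polynomial ℂ) : (pAntideriv p).derivative = p := by
  unfold pAntideriv
  rw [Polynomial.sum, map_sum]
  have : ∀ n ∈ p.support, Polynomial.derivative (Polynomial.C (p.coeff n / (n + 1)) *
      X ^ (n + 1)) = Polynomial.C (p.coeff n) * X ^ n := by
    intro n _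
    have hn : ((n : ℂ) + 1) ≠ 0 := Nat.cast_add_one_ne_zero n
    rw [Polynomial.derivative_C_mul, Polynomial.derivative_X_pow, Nat.add_sub_cancel,
      ← mul_assoc, ← Polynomial.C_mul]
    push_cast
    rw [div_mul_cancel₀ _ hn]
  rw [Finset.sum_congr rfl this]
  conv_rhs => rw [← Polynomial.sum_C_mul_X_pow_eq p]
  rw [Polynomial.sum_def]

lemma contAffinePow (m : ℕ) (q : Polynomial ℂ) (a b : ℂ) :
    Continuous fun s : ℝ => ((s:ℂ))^m * q.eval (a + b * s) :=
  (Complex.continuous_ofReal.pow m).mul (q.continuous.comp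
    (continuous_const.add (continuous_const.mul Complex.continuous_ofReal)))

lemma hasDerivAt_eval_affine_s5 (q : Polynomial ℂ) (a b : ℂ) (x : ℝ) :
    HasDerivAt (fun x : ℝ => q.eval (a + b * (x:ℂ)))
      (b * q.derivative.eval (a + b * (x:ℂ))) x := by
  have h2 : HasDerivAt (fun z : ℂ => a + b * z) b (x:ℂ) := by
    simpa using ((hasDerivAt_id ((x:ℝ):ℂ)).const_mul b).const_add a
  have h1 : HasDerivAt (fun z : ℂ => q.eval (a + b * z))
      (q.derivative.eval (a + b * (x:ℂ)) * b) (x:ℂ) :=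
    by have := HasDerivAt.comp (x:ℂ) (q.hasDerivAt (a + b * (x:ℂ))) h2; exact this
  simpa [mul_comm] using h1.comp_ofReal

lemma key_int (k : ℕ) (hk : 1 ≤ k) (a c : ℂ) (κ : ℝ) (h H : Polynomial ℂ)
    (hH : H.derivative = h) :
    ∫ s in (0:ℝ)..κ, ((s:ℂ))^(k-1) * H.eval (a + c * s)
      = (k:ℂ)⁻¹ * ((κ:ℂ)^k * H.eval (a + c * κ)
          - c * ∫ s in (0:ℝ)..κ, ((s:ℂ))^k * h.eval (a + c * s)) := by
  have hknz : (k:ℂ) ≠ 0 := Nat.cast_ne_zero.mpr (by omega)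
  have hderiv : ∀ s : ℝ, HasDerivAt (fun s : ℝ => ((s:ℂ))^k * H.eval (a + c * s))
      ((k:ℂ) * ((s:ℂ))^(k-1) * H.eval (a + c * s) + c * (((s:ℂ))^k * h.eval (a + c * s))) s := by
    intro s
    have hp : HasDerivAt (fun s : ℝ => ((s:ℂ))^k) ((k:ℂ) * ((s:ℂ))^(k-1)) s :=
      (hasDerivAt_pow k ((s:ℝ):ℂ)).comp_ofReal
    have he := hasDerivAt_eval_affine_s5 H a c s
    rw [hH] at he
    have := hp.mul he
    exact this.congr_deriv (by ring)
  have hint1 : IntervalIntegrable (fun s : ℝ => (k:ℂ) * ((s:ℂ))^(k-1) * H.eval (a + c * s))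
      volume 0 κ := by
    apply Continuous.intervalIntegrable
    exact (continuous_const.mul (contAffinePow (k-1) H a c)).congr (fun s => (mul_assoc _ _ _).symm)
  have hint2 : IntervalIntegrable (fun s : ℝ => c * (((s:ℂ))^k * h.eval (a + c * s)))
      volume 0 κ := (continuous_const.mul (contAffinePow k h a c)).intervalIntegrable _ _
  have hftc := intervalIntegral.integral_eq_sub_of_hasDerivAt
    (f := fun s : ℝ => ((s:ℂ))^k * H.eval (a + c * s))
    (fun s _ => hderiv s) (hint1.add hint2)
  rw [intervalIntegral.integral_add hint1 hint2] at hftc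
  simp only [mul_assoc] at hftc
  rw [intervalIntegral.integral_const_mul, intervalIntegral.integral_const_mul] at hftc
  have h0 : ((0:ℝ):ℂ)^k = 0 := by
    rw [Complex.ofReal_zero, zero_pow (by omega)]
  rw [h0, zero_mul, sub_zero] at hftc
  rw [← hftc]
  field_simp
  ring

/-- Lemma 2.15 of the paper: for `k ≥ 1`, `κ ∈ (0,1]`, `λ ≠ ξ` and a polynomial `h`,
`∫_0^κ ∫_0^t s^{k−1} h(κξ + (λ−ξ)t + (μ−λ)s) ds dt`
equals
`(1/k)((μ−λ)/(ξ−λ)) ∫_0^κ t^k h(κλ + (μ−λ)t) dt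
 − (1/k)((μ−ξ)/(ξ−λ)) ∫_0^κ t^k h(κξ + (μ−ξ)t) dt`. -/
theorem double_integral_sk_decomposition (k : ℕ) (hk : 1 ≤ k) (kappa : ℝ)
    (hk0 : 0 < kappa) (hk1 : kappa ≤ 1) (lam xi mu : ℂ) (hne : lam ≠ xi)
    (h : Polynomial ℂ) :
    (∫ t in (0:ℝ)..kappa, ∫ s in (0:ℝ)..t,
        ((s : ℂ)) ^ (k - 1) *
          h.eval ((kappa : ℂ) * xi + (lam - xi) * (t : ℂ) + (mu - lam) * (s : ℂ)))
      = (1 / (k : ℂ)) * ((mu - lam) / (xi - lam)) *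
          (∫ t in (0:ℝ)..kappa,
            ((t : ℂ)) ^ k * h.eval ((kappa : ℂ) * lam + (mu - lam) * (t : ℂ)))
        - (1 / (k : ℂ)) * ((mu - xi) / (xi - lam)) *
          (∫ t in (0:ℝ)..kappa,
            ((t : ℂ)) ^ k * h.eval ((kappa : ℂ) * xi + (mu - xi) * (t : ℂ))) := by
  have hκ : (0:ℝ) ≤ kappa := hk0.le
  have hknz : (k:ℂ) ≠ 0 := Nat.cast_ne_zero.mpr (by omega)
  set A : ℂ := (kappa:ℂ) * xi with hA
  set B : ℂ := lam - xi with hBdef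
  set C : ℂ := mu - lam with hCdef
  have hB : B ≠ 0 := sub_ne_zero.mpr hne
  set H := pAntideriv h with hHdef
  have hH : H.derivative = h := derivative_pAntideriv h
  have hcont : Continuous fun p : ℝ × ℝ =>
      ((p.2:ℂ))^(k-1) * h.eval (A + B * p.1 + C * p.2) := by
    apply Continuous.mul
    · exact (Complex.continuous_ofReal.comp continuous_snd).pow _
    · exact h.continuous.comp ((continuous_const.add (continuous_const.mul
        (Complex.continuous_ofReal.comp continuous_fst))).add
        (continuous_const.mul (Complex.continuous_ofReal.comp continuous_snd)))
  have hswap := triangle_swap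
    (f := fun t s => ((s:ℂ))^(k-1) * h.eval (A + B * t + C * s)) hcont hκ
  rw [hswap]
  have hinner : ∀ s : ℝ,
      (∫ t in s..kappa, ((s:ℂ))^(k-1) * h.eval (A + B * t + C * s))
        = B⁻¹ * (((s:ℂ))^(k-1) * H.eval ((A + B * kappa) + C * s))
          - B⁻¹ * (((s:ℂ))^(k-1) * H.eval (A + (B + C) * s)) := by
    intro s
    have hd : ∀ t : ℝ, HasDerivAt
        (fun t : ℝ => (B⁻¹ * ((s:ℂ))^(k-1)) * H.eval ((A + C * s) + B * t))
        (((s:ℂ))^(k-1) * h.eval (A + B * t + C * s)) t := by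
      intro t
      have := (hasDerivAt_eval_affine_s5 H (A + C * s) B t).const_mul (B⁻¹ * ((s:ℂ))^(k-1))
      rw [hH] at this
      have harg : (A + C * (s:ℂ)) + B * (t:ℂ) = A + B * t + C * s := by ring
      rw [harg] at this
      exact this.congr_deriv (by rw [← mul_assoc, mul_right_comm B⁻¹, inv_mul_cancel₀ hB, one_mul])
    have hcint : IntervalIntegrable
        (fun t : ℝ => ((s:ℂ))^(k-1) * h.eval (A + B * t + C * s)) volume s kappa := by
      apply Continuous.intervalIntegrable
      exact continuous_const.mul (h.continuous.comp
        ((continuous_const.add (continuous_const.mul Complex.continuous_ofReal)).add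
          continuous_const))
    have hftc := intervalIntegral.integral_eq_sub_of_hasDerivAt (fun t _ => hd t) hcint
    rw [hftc]
    have harg1 : (A + C * (s:ℂ)) + B * (kappa:ℂ) = (A + B * kappa) + C * s := by ring
    have harg2 : (A + C * (s:ℂ)) + B * (s:ℂ) = A + (B + C) * s := by ring
    rw [harg1, harg2]
    ring
  simp only [hinner]
  have hi1 : IntervalIntegrable
      (fun s : ℝ => B⁻¹ * (((s:ℂ))^(k-1) * H.eval ((A + B * kappa) + C * s)))
      volume 0 kappa :=
    (continuous_const.mul (contAffinePow (k-1) H (A + B * kappa) C)).intervalIntegrable _ _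
  have hi2 : IntervalIntegrable
      (fun s : ℝ => B⁻¹ * (((s:ℂ))^(k-1) * H.eval (A + (B + C) * s)))
      volume 0 kappa :=
    (continuous_const.mul (contAffinePow (k-1) H A (B + C))).intervalIntegrable _ _
  rw [intervalIntegral.integral_sub hi1 hi2, intervalIntegral.integral_const_mul,
    intervalIntegral.integral_const_mul,
    key_int k hk (A + B * kappa) C kappa h H hH,
    key_int k hk A (B + C) kappa h H hH]
  have e1 : (A + B * (kappa:ℂ)) + C * (kappa:ℂ) = A + (B + C) * (kappa:ℂ) := by ring
  rw [e1]
  have hJ1 : (∫ s in (0:ℝ)..kappa, ((s:ℂ))^k * h.eval ((A + B * kappa) + C * s))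
      = ∫ t in (0:ℝ)..kappa, ((t:ℂ))^k * h.eval ((kappa:ℂ) * lam + C * t) := by
    apply intervalIntegral.integral_congr
    intro x _
    have : (A + B * (kappa:ℂ)) + C * (x:ℂ) = (kappa:ℂ) * lam + C * x := by
      rw [hA, hBdef]; ring
    simp only [this]
  have hJ2 : (∫ s in (0:ℝ)..kappa, ((s:ℂ))^k * h.eval (A + (B + C) * s))
      = ∫ t in (0:ℝ)..kappa, ((t:ℂ))^k * h.eval (A + (mu - xi) * t) := by
    apply intervalIntegral.integral_congr
    intro x _
    have : A + (B + C) * (x:ℂ) = A + (mu - xi) * x := by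
      rw [hBdef, hCdef]; ring
    simp only [this]
  rw [hJ1, hJ2]
  have hx : xi - lam = -B := by rw [hBdef]; ring
  have hmu : mu - xi = B + C := by rw [hBdef, hCdef]; ring
  rw [hx, hmu]
  field_simp
  ring
end
end
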